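/- Let L be a nonempty regular language over a finite alphabet Σ, let k ≥ 1, and let T be the k-transition automaton of L. Let B be a trim deterministic k-block automaton recognizing L. Then B is compact if and only if B is isomorphic to a sub-automaton of T. -/

import Mathlib

set_option autoImplicit false

/-- A block automaton over an alphabet `α`: a set of initial states, a set of final
states, and a set of transitions labeled by words over `α`. -/
structure BlockAutomaton (α : Type) (Q : Type) where
  init : Set Q
  final : Set Q
  trans : Set (Q × List α × Q)

namespace BlockAutomaton

variable {α Q : Type}

/-- Well-formedness: the transition set is finite and every label is a block
(a nonempty word). -/
def IsWF (A : BlockAutomaton α Q) : Prop :=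
  A.trans.Finite ∧ ∀ t ∈ A.trans, t.2.1 ≠ ([] : List α)

/-- The transitive closure `δ*` of the transition relation. -/
inductive Path (A : BlockAutomaton α Q) : Q → List α → Q → Prop
  | refl (p : Q) : Path A p [] p
  | step {p r q : Q} {b u : List α} :
      (p, b, r) ∈ A.trans → Path A r u q → Path A p (b ++ u) q

/-- The right language of a state. -/
def rightLang (A : BlockAutomaton α Q) (q : Q) : Language α :=
  {w | ∃ f ∈ A.final, A.Path q w f}

/-- The language recognized by the automaton. -/
def lang (A : BlockAutomaton α Q) : Language α :=
  {w | ∃ i ∈ A.init, ∃ f ∈ A.final, A.Path i w f}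

/-- Deterministic: a unique initial state, and the labels of two distinct transitions
going out of the same state are never prefixes of one another. -/
def Deterministic (A : BlockAutomaton α Q) : Prop :=
  (∃ i, A.init = {i}) ∧
    ∀ p b₁ q₁ b₂ q₂, (p, b₁, q₁) ∈ A.trans → (p, b₂, q₂) ∈ A.trans →
      (b₁, q₁) ≠ (b₂, q₂) → ¬ b₁ <+: b₂

/-- Trim: every state is accessible and co-accessible. -/
def Trim (A : BlockAutomaton α Q) : Prop :=
  ∀ q : Q, (∃ i ∈ A.init, ∃ u, A.Path i u q) ∧ (∃ f ∈ A.final, ∃ v, A.Path q v f)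

/-- `k`-block: every transition label has length at most `k`. -/
def KBlock (A : BlockAutomaton α Q) (k : ℕ) : Prop :=
  ∀ t ∈ A.trans, t.2.1.length ≤ k

/-- Compact: no two distinct states have the same right language. -/
def Compact (A : BlockAutomaton α Q) : Prop :=
  ∀ p q : Q, A.rightLang p = A.rightLang q → p = q

/-- Left quotient `u⁻¹L` of a language by a word. -/
def leftQuot (u : List α) (L : Language α) : Language α := {w | u ++ w ∈ L}

/-- Residual: every right language is a left quotient of the recognized language. -/
def Residual (A : BlockAutomaton α Q) : Prop :=
  ∀ p : Q, ∃ u : List α, A.rightLang p = leftQuot u A.lang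

/-- L-equivalence: same language and same family of right languages. -/
def LEquiv {Q₁ Q₂ : Type} (A : BlockAutomaton α Q₁) (B : BlockAutomaton α Q₂) : Prop :=
  A.lang = B.lang ∧ Set.range A.rightLang = Set.range B.rightLang

/-- The set of final labels FB(A). -/
def finalLabels (A : BlockAutomaton α Q) : Set (List α) :=
  {b | ∃ f ∈ A.final, ∃ q, (f, b, q) ∈ A.trans}

/-- The set of consistency C(A): pairs (b, s) with b a block such that every final
state has a transition labeled b to s. -/
def consist (A : BlockAutomaton α Q) : Set (List α × Q) :=
  {bs | bs.1 ≠ [] ∧ ∀ f ∈ A.final, (f, bs.1, bs.2) ∈ A.trans}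

/-- The (b,s)-cut: remove every transition (f, b, s) with f final. -/
def cut (A : BlockAutomaton α Q) (b : List α) (s : Q) : BlockAutomaton α Q :=
  ⟨A.init, A.final, {t ∈ A.trans | ¬(t.1 ∈ A.final ∧ t.2.1 = b ∧ t.2.2 = s)}⟩

/-- (b, s) is a vacant pair: b is a block and no final state has a transition
labeled b to s. -/
def Vacant (A : BlockAutomaton α Q) (b : List α) (s : Q) : Prop :=
  b ≠ [] ∧ ∀ f ∈ A.final, (f, b, s) ∉ A.trans

/-- The (b,s)-add: add the transition (f, b, s) for every final state f. -/
def add (A : BlockAutomaton α Q) (b : List α) (s : Q) : BlockAutomaton α Q :=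
  ⟨A.init, A.final, A.trans ∪ {t | t.1 ∈ A.final ∧ t.2.1 = b ∧ t.2.2 = s}⟩

/-- The underlying edge relation of the automaton. -/
def Edge (A : BlockAutomaton α Q) (p q : Q) : Prop := ∃ b, (p, b, q) ∈ A.trans

/-- Reachability. -/
def Reach (A : BlockAutomaton α Q) : Q → Q → Prop := Relation.ReflTransGen A.Edge

/-- The orbit (strongly connected component) of a state. -/
def orbitOf (A : BlockAutomaton α Q) (q : Q) : Set Q := {p | A.Reach q p ∧ A.Reach p q}

/-- A set is an orbit if it is the strongly connected component of some state. -/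
def IsOrbit (A : BlockAutomaton α Q) (O : Set Q) : Prop := ∃ q, O = A.orbitOf q

/-- A trivial orbit: a single state with no self-loop. -/
def TrivialOrbit (A : BlockAutomaton α Q) (O : Set Q) : Prop :=
  ∃ p, O = {p} ∧ ∀ b, (p, b, p) ∉ A.trans

/-- A non re-entering component: a union of orbits such that no state outside
reachable from it can reach back. -/
def NonReentering (A : BlockAutomaton α Q) (R : Set Q) : Prop :=
  (∀ p ∈ R, A.orbitOf p ⊆ R) ∧
    ∀ r ∈ R, ∀ q, q ∉ R → A.Reach r q → ¬ A.Reach q r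

/-- A gate of R: a state of R that is final or the origin of an out-transition. -/
def IsGate (A : BlockAutomaton α Q) (R : Set Q) (g : Q) : Prop :=
  g ∈ R ∧ (g ∈ A.final ∨ ∃ b p, (g, b, p) ∈ A.trans ∧ p ∉ R)

/-- R is transverse: all gates agree on finality and on out-transitions. -/
def Transverse (A : BlockAutomaton α Q) (R : Set Q) : Prop :=
  ∀ g₁ g₂, A.IsGate R g₁ → A.IsGate R g₂ →
    (g₁ ∈ A.final ↔ g₂ ∈ A.final) ∧
      ∀ b p, p ∉ R → ((g₁, b, p) ∈ A.trans ↔ (g₂, b, p) ∈ A.trans)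

/-- The orbit property: every orbit is transverse. -/
def OrbitProperty (A : BlockAutomaton α Q) : Prop :=
  ∀ O : Set Q, A.IsOrbit O → A.Transverse O

/-- The restriction of the automaton to the internal transitions of R. -/
def internalAut (A : BlockAutomaton α Q) (R : Set Q) : BlockAutomaton α Q :=
  ⟨A.init, A.final, {t ∈ A.trans | t.1 ∈ R ∧ t.2.2 ∈ R}⟩

/-- The internal language of a state of R: words sending it to a gate of R
through internal transitions. -/
def Lin (A : BlockAutomaton α Q) (R : Set Q) (p : Q) : Language α :=
  {w | ∃ g, A.IsGate R g ∧ (A.internalAut R).Path p w g}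

/-- The external language of a state of R. -/
def Lext (A : BlockAutomaton α Q) (R : Set Q) (p : Q) : Language α :=
  {w | (p ∈ A.final ∧ w = []) ∨
    ∃ b q, (p, b, q) ∈ A.trans ∧ q ∉ R ∧ ∃ v, v ∈ A.rightLang q ∧ w = b ++ v}

/-- The external language of R: the (common, when R is transverse) external
language of the gates of R (empty if R has no gate). -/
def Lout (A : BlockAutomaton α Q) (R : Set Q) : Language α :=
  {w | ∃ g, A.IsGate R g ∧ w ∈ A.Lext R g}

/-- The automaton B_O of an orbit O used in the BW-test: transitions are the internal
transitions of O, final states are the gates of O (the initial states are irrelevant). -/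
def orbAut (A : BlockAutomaton α Q) (O : Set Q) : BlockAutomaton α Q :=
  ⟨A.init, {g | A.IsGate O g}, {t ∈ A.trans | t.1 ∈ O ∧ t.2.2 ∈ O}⟩

/-- Fuel-indexed version of the BW-test (each recursive call removes at least one
transition, so on automata with finitely many transitions the recursion needs only
finitely much fuel). -/
def BWTestFuel : ℕ → BlockAutomaton α Q → Prop
  | 0, _ => False
  | n + 1, A => A.OrbitProperty ∧
      ∀ O : Set Q, A.IsOrbit O → ¬ A.TrivialOrbit O →
        ∃ b s, (b, s) ∈ (A.orbAut O).consist ∧ BWTestFuel n ((A.orbAut O).cut b s)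

/-- The BW-test: A passes iff A has the orbit property and, for every nontrivial
orbit O of A, some consistent cut of the automaton B_O of the orbit passes the
BW-test (well-founded since every cut removes a transition; `BWTestFuel` is
monotone in the fuel, so the existential gives exactly this recursive predicate). -/
def BWTest (A : BlockAutomaton α Q) : Prop := ∃ n, BWTestFuel n A

/-- The orbit automaton Orb(A, q): states are the orbit of q, initial state q, final
states the gates of the orbit, transitions the internal transitions of the orbit. -/
def orbAutAt (A : BlockAutomaton α Q) (q : Q) :
    BlockAutomaton α {p : Q // p ∈ A.orbitOf q} where
  init := {x | x.val = q}
  final := {x | A.IsGate (A.orbitOf q) x.val}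
  trans := {t | (t.1.val, t.2.1, t.2.2.val) ∈ A.trans}

/-- The pathway function Δ. -/
def pathway (A : BlockAutomaton α Q) (p : Q) (u : List α) : Set (List α × Q) :=
  {vq | A.Path p (u ++ vq.1) vq.2 ∧
    ∀ x, x <+: vq.1 → x ≠ vq.1 → ∀ r, ¬ A.Path p (u ++ x) r}

/-- The states of the minimal DFA of L: the nonempty left quotients of L. -/
def QuotState (L : Language α) : Type :=
  {P : Language α // (∃ u : List α, P = leftQuot u L) ∧ ∃ w, w ∈ P}

/-- The minimal DFA of L. -/
def minDFA (L : Language α) : BlockAutomaton α (QuotState L) where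
  init := {P | P.val = L}
  final := {P | [] ∈ P.val}
  trans := {t | ∃ a : α, t.2.1 = [a] ∧ t.2.2.val = leftQuot [a] t.1.val}

/-- The k-transition automaton of L. -/
def kTransAut (L : Language α) (k : ℕ) : BlockAutomaton α (QuotState L) where
  init := (minDFA L).init
  final := (minDFA L).final
  trans := {t | (minDFA L).Path t.1 t.2.1 t.2.2 ∧ 1 ≤ t.2.1.length ∧ t.2.1.length ≤ k ∧
    ∀ u, u <+: t.2.1 → u ≠ [] → u ≠ t.2.1 → u ∉ t.1.val}

/-- B is isomorphic to a sub-automaton of T. -/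
def IsoToSub {Q₁ Q₂ : Type} (B : BlockAutomaton α Q₁) (T : BlockAutomaton α Q₂) : Prop :=
  ∃ φ : Q₁ → Q₂, Function.Injective φ ∧
    φ '' B.init ⊆ T.init ∧ φ '' B.final ⊆ T.final ∧
    ∀ p b q, (p, b, q) ∈ B.trans → (φ p, b, φ q) ∈ T.trans

/-- Isomorphism of block automata. -/
def Isomorphic {Q₁ Q₂ : Type} (B : BlockAutomaton α Q₁) (C : BlockAutomaton α Q₂) : Prop :=
  ∃ φ : Q₁ ≃ Q₂, φ '' B.init = C.init ∧ φ '' B.final = C.final ∧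
    ∀ p b q, ((p, b, q) ∈ B.trans ↔ (φ p, b, φ q) ∈ C.trans)

/-- The substitution of B for the orbit O(q) of A via h (iA is the unique initial
state of A). -/
def substAut {QB : Type} (A : BlockAutomaton α Q) (iA q : Q)
    (B : BlockAutomaton α QB) (h : Q → QB) :
    BlockAutomaton α ({p : Q // p ∉ A.orbitOf q} ⊕ QB) where
  init := {x | (iA ∈ A.orbitOf q ∧ x = Sum.inr (h iA)) ∨
    ∃ hp : iA ∉ A.orbitOf q, x = Sum.inl ⟨iA, hp⟩}
  final := {x | (∃ p, ∃ hp : p ∉ A.orbitOf q, p ∈ A.final ∧ x = Sum.inl ⟨p, hp⟩) ∨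
    ((∃ f ∈ A.final, f ∈ A.orbitOf q) ∧ ∃ fB ∈ B.final, x = Sum.inr fB)}
  trans := {t |
    (∃ p r b, ∃ hp : p ∉ A.orbitOf q, ∃ hr : r ∉ A.orbitOf q,
      (p, b, r) ∈ A.trans ∧ t = (Sum.inl ⟨p, hp⟩, b, Sum.inl ⟨r, hr⟩)) ∨
    (∃ p r b, (p, b, r) ∈ B.trans ∧ t = (Sum.inr p, b, Sum.inr r)) ∨
    (∃ p o b, ∃ hp : p ∉ A.orbitOf q,
      (p, b, o) ∈ A.trans ∧ o ∈ A.orbitOf q ∧ t = (Sum.inl ⟨p, hp⟩, b, Sum.inr (h o))) ∨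
    (∃ fB o p b, ∃ hp : p ∉ A.orbitOf q, fB ∈ B.final ∧
      (o, b, p) ∈ A.trans ∧ o ∈ A.orbitOf q ∧ t = (Sum.inr fB, b, Sum.inl ⟨p, hp⟩))}

end BlockAutomaton

namespace BlockAutomaton

variable {α Q : Type}

lemma Path.trans_append {A : BlockAutomaton α Q} {v : List α} {r : Q} :
    ∀ {p u q}, A.Path p u q → A.Path q v r → A.Path p (u ++ v) r := by
  intro p u q h1
  induction h1 with
  | refl => intro h2; simpa using h2
  | step ht _ ih => intro h2; rw [List.append_assoc]; exact Path.step ht (ih h2)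

lemma path_nil_eq {A : BlockAutomaton α Q} (hwf : A.IsWF) {p q : Q} {w : List α}
    (h : A.Path p w q) (hw : w = []) : p = q := by
  cases h with
  | refl => rfl
  | step ht h' => exact absurd (List.append_eq_nil_iff.mp hw).1 (hwf.2 _ ht)

lemma path_split {A : BlockAutomaton α Q} (hwf : A.IsWF) (hdet : A.Deterministic) :
    ∀ {p u q}, A.Path p u q → ∀ {w f}, A.Path p (u ++ w) f → A.Path q w f := by
  intro p u q h1
  induction h1 with
  | refl => intro w f h2; simpa using h2
  | @step p r q b u ht h' ih =>
    intro w f h2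
    rw [List.append_assoc] at h2
    generalize hx : b ++ (u ++ w) = x at h2
    cases h2 with
    | refl => exact absurd (List.append_eq_nil_iff.mp hx).1 (hwf.2 _ ht)
    | @step _ r' _ b' u₂ ht' h2' =>
      by_cases hpair : (b', r') = (b, r)
      · obtain ⟨hb, hr⟩ := Prod.mk.injEq .. ▸ hpair
        subst hb; subst hr
        have hu₂ : u ++ w = u₂ := List.append_cancel_left hx
        exact ih (hu₂ ▸ h2')
      · exfalso
        have hb'p : b' <+: b' ++ u₂ := ⟨u₂, rfl⟩
        have hbp : b <+: b' ++ u₂ := ⟨u ++ w, hx⟩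
        rcases List.prefix_or_prefix_of_prefix hb'p hbp with h | h
        · exact hdet.2 p b' r' b r ht' ht hpair h
        · exact hdet.2 p b r b' r' ht ht' (fun he => hpair he.symm) h

lemma mem_leftQuot {u w : List α} {L : Language α} : w ∈ leftQuot u L ↔ u ++ w ∈ L := Iff.rfl

lemma leftQuot_nil (L : Language α) : leftQuot [] L = L := rfl

lemma leftQuot_append (u v : List α) (L : Language α) :
    leftQuot (u ++ v) L = leftQuot v (leftQuot u L) := by
  ext w
  show (u ++ v) ++ w ∈ L ↔ u ++ (v ++ w) ∈ L
  rw [List.append_assoc]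

lemma rightLang_eq_quot {A : BlockAutomaton α Q} (hwf : A.IsWF) (hdet : A.Deterministic)
    {i : Q} (hinit : A.init = {i}) {p : Q} {u : List α} (hpath : A.Path i u p) :
    A.rightLang p = leftQuot u A.lang := by
  ext w
  constructor
  · rintro ⟨f, hf, hw⟩
    exact ⟨i, by rw [hinit]; rfl, f, hf, hpath.trans_append hw⟩
  · rintro ⟨i', hi', f, hf, hw⟩
    have hii : i' = i := by rw [hinit] at hi'; exact hi'
    subst hii
    exact ⟨f, hf, path_split hwf hdet hpath hw⟩

lemma rightLang_trans {A : BlockAutomaton α Q} (hwf : A.IsWF) (hdet : A.Deterministic)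
    (htrim : A.Trim) {p r : Q} {b : List α} (ht : (p, b, r) ∈ A.trans) :
    A.rightLang r = leftQuot b (A.rightLang p) := by
  obtain ⟨i, hinit⟩ := hdet.1
  obtain ⟨⟨i', hi', u, hu⟩, -⟩ := htrim p
  have hii : i' = i := by rw [hinit] at hi'; exact hi'
  subst hii
  have hpb : A.Path p b r := by simpa using Path.step ht (Path.refl r)
  rw [rightLang_eq_quot hwf hdet hinit (hu.trans_append hpb),
    rightLang_eq_quot hwf hdet hinit hu, leftQuot_append]

lemma minDFA_path_val {L : Language α} {P R : QuotState L} {w : List α}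
    (h : (minDFA L).Path P w R) : R.val = leftQuot w P.val := by
  induction h with
  | refl => exact (leftQuot_nil _).symm
  | @step P M R b u ht h' ih =>
    obtain ⟨a, hb, hval⟩ := ht
    subst hb
    rw [leftQuot_append, ih, hval]

lemma minDFA_path_exists {L : Language α} :
    ∀ (w : List α) (P R : QuotState L), (∃ x, x ∈ leftQuot w P.val) →
      R.val = leftQuot w P.val → (minDFA L).Path P w R := by
  intro w
  induction w with
  | nil =>
    intro P R _ hR
    have hPR : R = P := Subtype.ext (by rw [hR, leftQuot_nil])
    subst hPR
    exact Path.refl _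
  | cons a w ih =>
    intro P R hne hR
    obtain ⟨⟨u₀, hu₀⟩, -⟩ := P.2
    obtain ⟨x, hx⟩ := hne
    have hx' : w ++ x ∈ leftQuot [a] P.val := by
      exact hx
    have hQ : (∃ u, leftQuot [a] P.val = leftQuot u L) ∧ ∃ y, y ∈ leftQuot [a] P.val :=
      ⟨⟨u₀ ++ [a], by rw [hu₀, leftQuot_append]⟩, ⟨w ++ x, hx'⟩⟩
    have hstep : (P, [a], (⟨leftQuot [a] P.val, hQ⟩ : QuotState L)) ∈ (minDFA L).trans :=
      ⟨a, rfl, rfl⟩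
    exact Path.step hstep (ih _ _ ⟨x, hx⟩ (by rw [hR]; exact leftQuot_append [a] w P.val))

lemma not_mem_rightLang_of_proper_prefix {A : BlockAutomaton α Q} (hdet : A.Deterministic)
    {p q : Q} {b v : List α} (ht : (p, b, q) ∈ A.trans) (hv : v <+: b) (hvne : v ≠ [])
    (hvb : v ≠ b) : v ∉ A.rightLang p := by
  rintro ⟨f, hf, hpath⟩
  cases hpath with
  | refl => exact hvne rfl
  | @step _ r _ b₁ u₂ ht' hpath' =>
    have hb₁v : b₁ <+: b₁ ++ u₂ := ⟨u₂, rfl⟩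
    have hb₁b : b₁ <+: b := hb₁v.trans hv
    by_cases hpair : (b₁, r) = (b, q)
    · have hb : b₁ = b := (Prod.mk.injEq .. ▸ hpair).1
      subst hb
      exact hvb (hv.eq_of_length (le_antisymm hv.length_le hb₁v.length_le))
    · exact hdet.2 p b₁ r b q ht' ht hpair hb₁b

lemma path_map {Q₂ : Type} {A : BlockAutomaton α Q} {T : BlockAutomaton α Q₂} {φ : Q → Q₂}
    (hφ : ∀ p b q, (p, b, q) ∈ A.trans → (φ p, b, φ q) ∈ T.trans) :
    ∀ {p u q}, A.Path p u q → T.Path (φ p) u (φ q) := by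
  intro p u q h
  induction h with
  | refl => exact Path.refl _
  | step ht _ ih => exact Path.step (hφ _ _ _ ht) ih

end BlockAutomaton

/-- A trim deterministic k-block automaton recognizing a nonempty regular
language L is compact iff it is isomorphic to a sub-automaton of the k-transition
automaton of L. -/
theorem stmt3 {α QB : Type} [Fintype α] [Fintype QB]
    (L : Language α) (hreg : L.IsRegular) (hne : ∃ w, w ∈ L) (k : ℕ) (hk : 1 ≤ k)
    (B : BlockAutomaton α QB) (hwf : B.IsWF) (htrim : B.Trim)
    (hdet : B.Deterministic) (hkb : B.KBlock k) (hlang : B.lang = L) :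
    B.Compact ↔ B.IsoToSub (BlockAutomaton.kTransAut L k) := by
  obtain ⟨i, hinit⟩ := hdet.1
  have hrne : ∀ p : QB, ∃ w, w ∈ B.rightLang p := by
    intro p
    obtain ⟨-, f, hf, v, hv⟩ := htrim p
    exact ⟨v, f, hf, hv⟩
  have hquot : ∀ p : QB, ∃ u, B.rightLang p = BlockAutomaton.leftQuot u L := by
    intro p
    obtain ⟨⟨i', hi', u, hu⟩, -⟩ := htrim p
    have hii : i' = i := by rw [hinit] at hi'; exact hi'
    subst hii
    exact ⟨u, by rw [BlockAutomaton.rightLang_eq_quot hwf hdet hinit hu, hlang]⟩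
  constructor
  · -- compact → embeds
    intro hcomp
    refine ⟨fun p => ⟨B.rightLang p, hquot p, hrne p⟩, ?_, ?_, ?_, ?_⟩
    · intro p q h
      exact hcomp p q (congrArg Subtype.val h)
    · rintro _ ⟨p, hp, rfl⟩
      show B.rightLang p = L
      have hpi : p = i := by rw [hinit] at hp; exact hp
      subst hpi
      rw [BlockAutomaton.rightLang_eq_quot hwf hdet hinit (BlockAutomaton.Path.refl p),
        BlockAutomaton.leftQuot_nil, hlang]
    · rintro _ ⟨p, hp, rfl⟩
      exact ⟨p, hp, BlockAutomaton.Path.refl p⟩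
    · intro p b q ht
      refine ⟨?_, List.length_pos_iff.mpr (hwf.2 _ ht), hkb _ ht, ?_⟩
      · refine BlockAutomaton.minDFA_path_exists b _ _ ?_ ?_
        · obtain ⟨w, hw⟩ := hrne q
          exact ⟨w, (BlockAutomaton.rightLang_trans hwf hdet htrim ht) ▸ hw⟩
        · exact BlockAutomaton.rightLang_trans hwf hdet htrim ht
      · intro u hu hune huneb
        exact BlockAutomaton.not_mem_rightLang_of_proper_prefix hdet ht hu hune huneb
  · -- embeds → compact
    rintro ⟨φ, hinj, hinitφ, hfinφ, htransφ⟩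
    have hφi : (φ i).val = L := hinitφ ⟨i, by rw [hinit]; rfl, rfl⟩
    have key : ∀ {p u q}, B.Path p u q →
        (φ p).val = B.rightLang p → (φ q).val = B.rightLang q := by
      intro p u q h
      induction h with
      | refl => exact id
      | @step p r q b u ht h' ih =>
        intro hp
        apply ih
        rw [BlockAutomaton.minDFA_path_val (htransφ _ _ _ ht).1, hp]
        exact (BlockAutomaton.rightLang_trans hwf hdet htrim ht).symm
    have keyall : ∀ p, (φ p).val = B.rightLang p := by
      intro p
      obtain ⟨⟨i', hi', u, hu⟩, -⟩ := htrim p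
      have hii : i' = i := by rw [hinit] at hi'; exact hi'
      subst hii
      refine key hu ?_
      rw [hφi, BlockAutomaton.rightLang_eq_quot hwf hdet hinit (BlockAutomaton.Path.refl i'),
        BlockAutomaton.leftQuot_nil, hlang]
    intro p q hpq
    exact hinj (Subtype.ext (by rw [keyall p, keyall q, hpq]))
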